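/- For every real x with 0 < x < 1, s₁(x) := ∑_{j=2}^∞ ((−1/2)_j (1/2 − j) / (j!(1−j))) (−x)^j equals (1/4)[−2 + 2√(1+x) + x(2·ln 2 − 1 − 2·ln(1 + √(1+x)))]. -/

import Mathlib

open scoped Nat

/-- Pochhammer symbol `(a)_j` for real `a`. -/
noncomputable def poch (a : ℝ) (j : ℕ) : ℝ := (ascPochhammer ℝ j).eval a

open Set

lemma poch_zero (a : ℝ) : poch a 0 = 1 := by simp [poch]

lemma poch_succ (a : ℝ) (k : ℕ) : poch a (k+1) = poch a k * (a + k) := by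
  simp [poch, ascPochhammer_succ_eval]

lemma poly_geom (d : ℕ) {r : ℝ} (h0 : 0 ≤ r) (h1 : r < 1) :
    Summable (fun k : ℕ => ((k:ℝ)+1)^d * r^k) := by
  rcases eq_or_lt_of_le h0 with h | h
  · apply summable_of_ne_finset_zero (s := {0})
    intro b hb
    have hb0 : b ≠ 0 := by simpa using hb
    simp [← h, zero_pow hb0]
  · have hn : ‖r‖ < 1 := by rwa [Real.norm_eq_abs, abs_of_nonneg h0]
    have H := summable_pow_mul_geometric_of_norm_lt_one (R := ℝ) d hn
    have H1 : Summable (fun k : ℕ => ((k+1:ℕ):ℝ)^d * r^(k+1)) :=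
      (summable_nat_add_iff 1).mpr H
    have H2 := H1.mul_left r⁻¹
    refine H2.congr fun k => ?_
    have hr : r ≠ 0 := ne_of_gt h
    push_cast
    rw [pow_succ]
    field_simp

lemma sum_aux {a : ℕ → ℝ} {C : ℝ} (hC : ∀ k, |a k| ≤ C * ((k:ℝ)+1)^2) {y : ℝ}
    (hy : |y| < 1) : Summable (fun k => a k * y^k) := by
  refine Summable.of_norm_bounded
    (((poly_geom 2 (abs_nonneg y) hy)).mul_left C) fun k => ?_
  rw [Real.norm_eq_abs, abs_mul, abs_pow]
  calc |a k| * |y|^k ≤ (C * ((k:ℝ)+1)^2) * |y|^k :=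
        mul_le_mul_of_nonneg_right (hC k) (pow_nonneg (abs_nonneg y) k)
    _ = C * (((k:ℝ)+1)^2 * |y|^k) := by ring

lemma deriv_aux {a : ℕ → ℝ} {C : ℝ} (hC : ∀ k, |a k| ≤ C * ((k:ℝ)+1)^2) {y : ℝ}
    (hy : |y| < 1) :
    HasDerivAt (fun z : ℝ => ∑' k, a k * z^k)
      (∑' k, (((k:ℕ):ℝ)+1) * a (k+1) * y^k) y := by
  set r : ℝ := (1 + |y|)/2 with hr
  have hr0 : 0 < r := by positivity
  have hr1 : r < 1 := by rw [hr]; linarith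
  have hry : |y| < r := by rw [hr]; linarith [abs_nonneg y]
  have hCnn : 0 ≤ C := by
    have := hC 0
    norm_num at this
    linarith [abs_nonneg (a 0)]
  set u : ℕ → ℝ := fun k => C/r * ((k:ℝ)+1)^3 * r^k with hu_def
  have hu : Summable u := by
    have := (poly_geom 3 hr0.le hr1).mul_left (C/r)
    refine this.congr fun k => by rw [hu_def]; ring
  have hmem : y ∈ Ioo (-r) r := by
    rw [mem_Ioo, ← abs_lt]; exact hry
  have h0mem : (0:ℝ) ∈ Ioo (-r) r := by
    rw [mem_Ioo, ← abs_lt]; simpa using hr0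
  have hg : ∀ n : ℕ, ∀ z ∈ Ioo (-r) r,
      HasDerivAt (fun w : ℝ => a n * w^n) (a n * ((n:ℝ) * z^(n-1))) z := fun n z _ =>
    (hasDerivAt_pow n z).const_mul (a n)
  have hg' : ∀ n : ℕ, ∀ z ∈ Ioo (-r) r, ‖a n * ((n:ℝ) * z^(n-1))‖ ≤ u n := by
    intro n z hz
    have hzr : |z| ≤ r := by
      rw [abs_le]; exact ⟨hz.1.le, hz.2.le⟩
    rw [Real.norm_eq_abs]
    match n with
    | 0 => simpa [hu_def] using by positivity
    | (m+1) =>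
      have hpow : |z|^m ≤ r^m := pow_le_pow_left₀ (abs_nonneg z) hzr m
      have h1 : |a (m+1) * (((m+1:ℕ):ℝ) * z^m)| ≤ (C * ((m:ℝ)+2)^2) * (((m:ℝ)+1) * r^m) := by
        rw [abs_mul, abs_mul, abs_pow]
        have h2 : |a (m+1)| ≤ C * ((m:ℝ)+2)^2 := by
          have := hC (m+1); push_cast at this ⊢; linarith
        have h3 : |((m+1:ℕ):ℝ)| * |z|^m ≤ ((m:ℝ)+1) * r^m := by
          rw [Nat.abs_cast]; push_cast
          exact mul_le_mul_of_nonneg_left hpow (by positivity)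
        exact mul_le_mul h2 h3 (by positivity) (by positivity)
      have hueq : u (m+1) = C * ((m:ℝ)+2)^3 * r^m := by
        rw [hu_def]; push_cast
        rw [pow_succ]
        field_simp
        ring
      have hrm : (0:ℝ) ≤ r^m := by positivity
      simp only [Nat.add_sub_cancel]
      refine h1.trans ?_
      rw [hueq]
      calc C * ((m:ℝ)+2)^2 * (((m:ℝ)+1) * r^m)
          ≤ C * ((m:ℝ)+2)^2 * (((m:ℝ)+2) * r^m) := by
            apply mul_le_mul_of_nonneg_left _ (by positivity)
            exact mul_le_mul_of_nonneg_right (by linarith) hrm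
        _ = C * ((m:ℝ)+2)^3 * r^m := by ring
  have hg0 : Summable fun n : ℕ => a n * (0:ℝ)^n := by
    apply summable_of_ne_finset_zero (s := {0})
    intro b hb
    have hb0 : b ≠ 0 := by simpa using hb
    simp [zero_pow hb0]
  have H := hasDerivAt_tsum_of_isPreconnected hu isOpen_Ioo
    (convex_Ioo (-r) r).isPreconnected hg hg' h0mem hg0 hmem
  have hs : Summable (fun n : ℕ => a n * ((n:ℝ) * y^(n-1))) :=
    Summable.of_norm_bounded hu fun n => hg' n y hmem
  have hval : (∑' n : ℕ, a n * ((n:ℝ) * y^(n-1))) = ∑' k, (((k:ℕ):ℝ)+1) * a (k+1) * y^k := by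
    rw [Summable.tsum_eq_zero_add hs]
    simp only [Nat.cast_zero, zero_mul, mul_zero, zero_add]
    refine tsum_congr fun k => ?_
    push_cast
    ring
  rw [hval] at H
  exact H

lemma const_on_Ioo {f : ℝ → ℝ} (hf : ∀ y ∈ Set.Ioo (-1:ℝ) 1, HasDerivAt f 0 y) {y : ℝ}
    (hy : y ∈ Set.Ioo (-1:ℝ) 1) : f y = f 0 := by
  have h0 : (0:ℝ) ∈ Set.Ioo (-1:ℝ) 1 := by norm_num
  refine Convex.is_const_of_fderivWithin_eq_zero (𝕜 := ℝ) (convex_Ioo _ _)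
    (fun z hz => ((hf z hz).differentiableAt).differentiableWithinAt) ?_ hy h0
  intro z hz
  rw [fderivWithin_of_isOpen isOpen_Ioo hz, (hf z hz).hasFDerivAt.fderiv]
  ext
  simp

/-- binomial coefficient `binom(-3/2, k)` defined recursively. -/
noncomputable def bb : ℕ → ℝ
  | 0 => 1
  | (k+1) => bb k * (-(3:ℝ)/2 - (k:ℕ)) / ((k:ℕ)+1)

lemma bb_abs_le (k : ℕ) : |bb k| ≤ (k:ℝ) + 1 := by
  induction k with
  | zero => simp [bb]
  | succ m ih =>
    have h1 : |bb (m+1)| = |bb m| * ((m:ℝ) + 3/2) / ((m:ℝ)+1) := by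
      rw [bb, abs_div, abs_mul]
      congr 1
      · congr 1
        rw [abs_of_nonpos (by push_cast; linarith)]
        push_cast; ring
      · rw [abs_of_pos (by positivity)]
    rw [h1]
    rw [div_le_iff₀ (by positivity : (0:ℝ) < (m:ℝ)+1)]
    push_cast
    nlinarith [abs_nonneg (bb m), ih]

lemma bb_bound : ∀ k : ℕ, |bb k| ≤ 1 * ((k:ℝ)+1)^2 := by
  intro k
  refine (bb_abs_le k).trans ?_
  nlinarith [Nat.cast_nonneg (α := ℝ) k]

lemma bb_succ_mul (k : ℕ) : (((k:ℕ):ℝ)+1) * bb (k+1) = (-(3:ℝ)/2 - (k:ℝ)) * bb k := by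
  rw [bb]
  have : ((k:ℝ)+1) ≠ 0 := by positivity
  field_simp

lemma bb_ode {y : ℝ} (hy : |y| < 1) :
    (∑' k, (((k:ℕ):ℝ)+1) * bb (k+1) * y^k) * (1+y) = -(3/2) * (∑' k, bb k * y^k) := by
  have hS : Summable (fun k => bb k * y^k) := sum_aux bb_bound hy
  have hTb : ∀ k : ℕ, |(k:ℝ) * bb k| ≤ 2 * ((k:ℝ)+1)^2 := by
    intro k
    rw [abs_mul, Nat.abs_cast]
    nlinarith [bb_abs_le k, Nat.cast_nonneg (α := ℝ) k, abs_nonneg (bb k)]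
  have hT : Summable (fun k : ℕ => ((k:ℝ) * bb k) * y^k) := sum_aux hTb hy
  have hDb : ∀ k : ℕ, |(((k:ℕ):ℝ)+1) * bb (k+1)| ≤ 4 * ((k:ℝ)+1)^2 := by
    intro k
    rw [abs_mul]
    have h1 : |(((k:ℕ):ℝ)+1)| = (k:ℝ)+1 := abs_of_pos (by positivity)
    rw [h1]
    nlinarith [bb_abs_le (k+1), Nat.cast_nonneg (α := ℝ) k,
      abs_nonneg (bb (k+1)), Nat.cast_add_one (R := ℝ) k]
  have hD : Summable (fun k => ((((k:ℕ):ℝ)+1) * bb (k+1)) * y^k) := sum_aux hDb hy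
  set D := ∑' k, (((k:ℕ):ℝ)+1) * bb (k+1) * y^k with hD_def
  set S := ∑' k, bb k * y^k with hS_def
  set T := ∑' k : ℕ, ((k:ℝ) * bb k) * y^k with hT_def
  have e1 : D = -(3/2) * S - T := by
    rw [hD_def]
    have : ∀ k : ℕ, (((k:ℕ):ℝ)+1) * bb (k+1) * y^k
        = (-(3/2)) * (bb k * y^k) + (-(((k:ℝ) * bb k) * y^k)) := by
      intro k
      rw [show (((k:ℕ):ℝ)+1) * bb (k+1) = (-(3:ℝ)/2 - (k:ℝ)) * bb k from bb_succ_mul k]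
      ring
    rw [tsum_congr this, Summable.tsum_add (hS.mul_left _) hT.neg, tsum_neg, tsum_mul_left,
      hS_def, hT_def]
    ring
  have e2 : T = y * D := by
    rw [hT_def, Summable.tsum_eq_zero_add hT]
    simp only [Nat.cast_zero, zero_mul, zero_add]
    rw [hD_def, ← tsum_mul_left]
    refine tsum_congr fun k => ?_
    push_cast
    ring
  rw [e1]
  rw [e1] at e2
  linarith [e2]

lemma Bf_eq {y : ℝ} (hy : y ∈ Set.Ioo (-1:ℝ) 1) :
    (∑' k, bb k * y^k) = ((Real.sqrt (1+y))^3)⁻¹ := by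
  have key : ∀ z ∈ Set.Ioo (-1:ℝ) 1,
      HasDerivAt (fun w => (∑' k, bb k * w^k) * (Real.sqrt (1+w))^3) 0 z := by
    intro z hz
    have hz1 : (0:ℝ) < 1 + z := by linarith [hz.1]
    have hzabs : |z| < 1 := abs_lt.mpr ⟨hz.1, hz.2⟩
    set s := Real.sqrt (1+z) with hs_def
    have hs0 : 0 < s := Real.sqrt_pos.mpr hz1
    have hs2 : s^2 = 1+z := Real.sq_sqrt hz1.le
    have hders : HasDerivAt (fun w => Real.sqrt (1+w)) (1/(2*s)) z := by
      have h1 : HasDerivAt (fun w : ℝ => 1+w) 1 z := by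
        simpa using (hasDerivAt_id z).const_add (1:ℝ)
      have h2 := (Real.hasDerivAt_sqrt (ne_of_gt hz1)).comp z h1
      simpa [Function.comp_def, hs_def] using h2
    have hB := deriv_aux bb_bound hzabs
    have hcube : HasDerivAt (fun w => (Real.sqrt (1+w))^3)
        ((3:ℕ) * s^2 * (1/(2*s))) z := hders.pow 3
    have hprod := hB.mul hcube
    have hODE := bb_ode hzabs
    refine hprod.congr_deriv ?_
    have hs3 : s^3 = s * (1+z) := by rw [← hs2]; ring
    rw [hs3]
    push_cast
    field_simp
    nlinarith [hODE]
  have hconst := const_on_Ioo key hy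
  have h0 : (∑' k, bb k * (0:ℝ)^k) = 1 := by
    rw [tsum_eq_single 0 (fun b hb => by simp [zero_pow hb])]
    simp [bb]
  rw [h0] at hconst
  simp only [add_zero, Real.sqrt_one, one_pow, mul_one] at hconst
  have hy1 : (0:ℝ) < 1 + y := by linarith [hy.1]
  have hs0 : 0 < Real.sqrt (1+y) := Real.sqrt_pos.mpr hy1
  have hs3 : (Real.sqrt (1+y))^3 ≠ 0 := by positivity
  field_simp
  rw [hconst]

/-- Coefficients (in `x^k`) of the series `s₁`. -/
noncomputable def aa : ℕ → ℝ
  | 0 => 0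
  | 1 => 0
  | (k+2) => poch (-(1/2)) (k + 2) * (1/2 - ((k:ℝ) + 2)) /
      ((((k + 2)!) : ℝ) * (1 - ((k:ℝ) + 2))) * (-1)^k

lemma aa_eq (k : ℕ) : aa (k+2) = poch (-(1/2)) (k + 2) * (1/2 - ((k:ℝ) + 2)) /
      ((((k + 2)!) : ℝ) * (1 - ((k:ℝ) + 2))) * (-1)^k := rfl

lemma poch_abs_le (k : ℕ) : |poch (-(1/2)) k| ≤ (k)! := by
  induction k with
  | zero => simp [poch_zero]
  | succ m ih =>
    rw [poch_succ, abs_mul]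
    have h1 : |(-(1/2) : ℝ) + ((m:ℕ):ℝ)| ≤ ((m:ℕ):ℝ) + 1 := by
      rw [abs_le]
      constructor <;> [linarith [Nat.cast_nonneg (α := ℝ) m]; linarith [Nat.cast_nonneg (α := ℝ) m]]
    calc |poch (-(1/2)) m| * |(-(1/2) + ((m:ℕ):ℝ))| ≤ ((m)! : ℝ) * (((m:ℕ):ℝ)+1) :=
          mul_le_mul ih h1 (abs_nonneg _) (by positivity)
      _ = (((m+1))! : ℝ) := by
          rw [Nat.factorial_succ]; push_cast; ring

lemma aa_abs_le (k : ℕ) : |aa k| ≤ 2 := by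
  match k with
  | 0 => norm_num [aa]
  | 1 => norm_num [aa]
  | (m+2) =>
    rw [aa_eq, abs_mul, abs_pow, abs_neg, abs_one, one_pow, mul_one, abs_div]
    have hf : (0:ℝ) < (((m+2)!) : ℝ) := by exact_mod_cast Nat.factorial_pos (m+2)
    have hnum : |poch (-(1/2)) (m+2) * (1/2 - ((m:ℝ)+2))| ≤ (((m+2)!):ℝ) * ((m:ℝ) + 3/2) := by
      rw [abs_mul]
      apply mul_le_mul (poch_abs_le (m+2)) _ (abs_nonneg _) (by positivity)
      rw [abs_of_nonpos (by linarith [Nat.cast_nonneg (α := ℝ) m])]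
      linarith
    have hden : |(((m+2)!):ℝ) * (1 - ((m:ℝ)+2))| = (((m+2)!):ℝ) * ((m:ℝ)+1) := by
      rw [abs_mul, abs_of_pos hf, abs_of_nonpos (by linarith [Nat.cast_nonneg (α := ℝ) m])]
      ring_nf
    rw [hden]
    rw [div_le_iff₀ (by positivity)]
    refine hnum.trans ?_
    nlinarith [Nat.cast_nonneg (α := ℝ) m, hf]

noncomputable def aa1 (k : ℕ) : ℝ := (((k:ℕ):ℝ)+1) * aa (k+1)
noncomputable def aa2 (k : ℕ) : ℝ := (((k:ℕ):ℝ)+1) * aa1 (k+1)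

lemma aa_bound : ∀ k : ℕ, |aa k| ≤ 2 * ((k:ℝ)+1)^2 := by
  intro k
  refine (aa_abs_le k).trans ?_
  nlinarith [Nat.cast_nonneg (α := ℝ) k]

lemma aa1_lin (k : ℕ) : |aa1 k| ≤ 2 * ((k:ℝ)+1) := by
  rw [aa1, abs_mul, abs_of_pos (by positivity : (0:ℝ) < ((k:ℕ):ℝ)+1)]
  nlinarith [aa_abs_le (k+1), abs_nonneg (aa (k+1)), Nat.cast_nonneg (α := ℝ) k]

lemma aa1_bound : ∀ k : ℕ, |aa1 k| ≤ 2 * ((k:ℝ)+1)^2 := by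
  intro k
  refine (aa1_lin k).trans ?_
  nlinarith [Nat.cast_nonneg (α := ℝ) k]

lemma aa2_bound : ∀ k : ℕ, |aa2 k| ≤ 4 * ((k:ℝ)+1)^2 := by
  intro k
  rw [aa2, abs_mul, abs_of_pos (by positivity : (0:ℝ) < ((k:ℕ):ℝ)+1)]
  have h := aa1_lin (k+1)
  push_cast at h
  nlinarith [abs_nonneg (aa1 (k+1)), Nat.cast_nonneg (α := ℝ) k]

lemma idE (k : ℕ) : aa2 k = (1/4) * bb (k+1) := by
  induction k with
  | zero =>
    rw [aa2, aa1]
    norm_num [aa_eq, bb, poch_succ, poch_zero]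
  | succ m ih =>
    rw [aa2, aa1]
    rw [aa2, aa1, aa_eq m] at ih
    have egoal : aa (m+1+1+1) = poch (-(1/2)) ((m+1)+2) * (1/2 - (((m+1:ℕ):ℝ)+2)) /
        (((((m+1)+2)!) : ℝ) * (1 - (((m+1:ℕ):ℝ)+2))) * (-1)^(m+1) := aa_eq (m+1)
    rw [egoal]
    have hpoch : poch (-(1/2)) ((m+1)+2) = poch (-(1/2)) (m+2) * (-(1/2) + ((m:ℝ)+2)) := by
      rw [show (m+1)+2 = (m+2)+1 from rfl, poch_succ]
      push_cast; ring
    have hfact : ((((m+1)+2)!) : ℝ) = ((m:ℝ)+3) * (((m+2)!) : ℝ) := by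
      rw [show (m+1)+2 = (m+2)+1 from rfl, Nat.factorial_succ]
      push_cast; ring
    have hbb : bb (m+1+1) = bb (m+1) * (-(3:ℝ)/2 - ((m:ℝ)+1)) / ((m:ℝ)+2) := by
      rw [bb]; push_cast; ring_nf
    have hpw : (-1:ℝ)^(m+1) = (-1)^m * (-1) := pow_succ _ _
    rw [hpoch, hfact, hbb, hpw]
    have hQ : (((m+2)!) : ℝ) ≠ 0 := by
      exact_mod_cast Nat.factorial_ne_zero (m+2)
    have h1 : (1 : ℝ) - ((m:ℝ)+2) ≠ 0 := by
      intro h; nlinarith [Nat.cast_nonneg (α := ℝ) m]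
    have h2 : (1 : ℝ) - (((m:ℝ))+1+2) ≠ 0 := by
      intro h; nlinarith [Nat.cast_nonneg (α := ℝ) m]
    have h3 : ((m:ℝ)+3) ≠ 0 := by positivity
    have h4 : ((m:ℝ)+2) ≠ 0 := by positivity
    have hB : bb (m+1) = 4 * ((((m:ℝ))+1) * ((((m:ℝ))+2) * (poch (-(1/2)) (m+2) *
        (1/2 - (((m:ℝ))+2)) / ((((m+2)!) : ℝ) * (1 - (((m:ℝ))+2))) * (-1)^m))) := by
      push_cast at ih
      linarith [ih]
    rw [hB]
    push_cast
    field_simp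
    ring

noncomputable def FF (y : ℝ) : ℝ := (1/4) * (-2 + 2 * Real.sqrt (1 + y) +
    y * (2 * Real.log 2 - 1 - 2 * Real.log (1 + Real.sqrt (1 + y))))

noncomputable def FF1 (y : ℝ) : ℝ := (1/2) * ((Real.sqrt (1+y))⁻¹ - 1 + Real.log 2 -
    Real.log (1 + Real.sqrt (1+y)))

noncomputable def FPP (y : ℝ) : ℝ := -(1/(4*(Real.sqrt (1+y))^3)) -
    1/(4*Real.sqrt (1+y)*(1+Real.sqrt (1+y)))

lemma sqrt_hasDeriv {y : ℝ} (hy1 : 0 < 1 + y) :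
    HasDerivAt (fun w => Real.sqrt (1+w)) (1/(2*Real.sqrt (1+y))) y := by
  have h1 : HasDerivAt (fun w : ℝ => 1+w) 1 y := by
    simpa using (hasDerivAt_id y).const_add (1:ℝ)
  have h2 := (Real.hasDerivAt_sqrt (ne_of_gt hy1)).comp y h1
  simpa [Function.comp_def] using h2

lemma hasDeriv_g0 {y : ℝ} (hy : |y| < 1) :
    HasDerivAt (fun z : ℝ => ∑' k, aa k * z^k) (∑' k, aa1 k * y^k) y := by
  have h := deriv_aux aa_bound hy
  simpa only [aa1] using h

lemma hasDeriv_g1 {y : ℝ} (hy : |y| < 1) :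
    HasDerivAt (fun z : ℝ => ∑' k, aa1 k * z^k) (∑' k, aa2 k * y^k) y := by
  have h := deriv_aux aa1_bound hy
  simpa only [aa2] using h

lemma hasDeriv_FF {y : ℝ} (hy : y ∈ Set.Ioo (-1:ℝ) 1) : HasDerivAt FF (FF1 y) y := by
  have hy1 : (0:ℝ) < 1 + y := by linarith [hy.1]
  set s := Real.sqrt (1+y) with hs_def
  have hs0 : 0 < s := Real.sqrt_pos.mpr hy1
  have hs2 : s^2 = 1+y := Real.sq_sqrt hy1.le
  have hders : HasDerivAt (fun w => Real.sqrt (1+w)) (1/(2*s)) y := sqrt_hasDeriv hy1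
  have hlog : HasDerivAt (fun w => Real.log (1 + Real.sqrt (1+w))) ((1/(2*s))/(1+s)) y :=
    (hders.const_add 1).log (by positivity)
  have hmul : HasDerivAt (fun w => 2 * Real.log (1 + Real.sqrt (1+w)))
      (2*((1/(2*s))/(1+s))) y := by
    simpa using hlog.const_mul (2:ℝ)
  have hin : HasDerivAt (fun w => 2 * Real.log 2 - 1 - 2 * Real.log (1 + Real.sqrt (1+w)))
      (-(2*((1/(2*s))/(1+s)))) y := hmul.const_sub (2 * Real.log 2 - 1)
  have hprod := (hasDerivAt_id y).mul hin
  have hsq : HasDerivAt (fun w : ℝ => -2 + 2 * Real.sqrt (1+w)) (2*(1/(2*s))) y := by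
    simpa using (hders.const_mul (2:ℝ)).const_add (-2:ℝ)
  have htot := (hsq.add hprod).const_mul (1/4 : ℝ)
  have hFF : HasDerivAt FF
      (1/4 * (2*(1/(2*s)) + (1 * (2 * Real.log 2 - 1 - 2 * Real.log (1 + Real.sqrt (1+y))) +
        y * -(2*((1/(2*s))/(1+s)))))) y := by
    refine htot.congr_of_eventuallyEq ?_
    filter_upwards with w
    simp only [FF, id_eq, Pi.add_apply, Pi.mul_apply]
  convert hFF using 1
  rw [FF1, ← hs_def]
  have hyv : y = s^2 - 1 := by linarith [hs2]
  rw [hyv]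
  field_simp
  ring

lemma hasDeriv_FF1 {y : ℝ} (hy : y ∈ Set.Ioo (-1:ℝ) 1) : HasDerivAt FF1 (FPP y) y := by
  have hy1 : (0:ℝ) < 1 + y := by linarith [hy.1]
  set s := Real.sqrt (1+y) with hs_def
  have hs0 : 0 < s := Real.sqrt_pos.mpr hy1
  have hders : HasDerivAt (fun w => Real.sqrt (1+w)) (1/(2*s)) y := sqrt_hasDeriv hy1
  have hlog : HasDerivAt (fun w => Real.log (1 + Real.sqrt (1+w))) ((1/(2*s))/(1+s)) y :=
    (hders.const_add 1).log (by positivity)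
  have hinv : HasDerivAt (fun w => (Real.sqrt (1+w))⁻¹) (-(1/(2*s))/s^2) y :=
    hders.inv (ne_of_gt hs0)
  have htot := (((hinv.sub_const 1).add_const (Real.log 2)).sub hlog).const_mul (1/2 : ℝ)
  have hFF1 : HasDerivAt FF1 ((1/2 : ℝ) * (-(1/(2*s))/s^2 - (1/(2*s))/(1+s))) y := by
    refine htot.congr_of_eventuallyEq ?_
    filter_upwards with w
    simp only [FF1, Pi.sub_apply]
  convert hFF1 using 1
  rw [FPP, ← hs_def]
  field_simp
  ring

lemma g2_eq_FPP {y : ℝ} (hy : y ∈ Set.Ioo (-1:ℝ) 1) : (∑' k, aa2 k * y^k) = FPP y := by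
  have hy1 : (0:ℝ) < 1 + y := by linarith [hy.1]
  have hyabs : |y| < 1 := abs_lt.mpr ⟨hy.1, hy.2⟩
  rcases eq_or_ne y 0 with h0 | h0
  · subst h0
    rw [tsum_eq_single 0 (fun b hb => by simp [zero_pow hb])]
    rw [idE 0]
    norm_num [bb, FPP, Real.sqrt_one]
  · set s := Real.sqrt (1+y) with hs_def
    have hs0 : 0 < s := Real.sqrt_pos.mpr hy1
    have hs2 : s^2 = 1+y := Real.sq_sqrt hy1.le
    have hsumb : Summable (fun k => bb k * y^k) := sum_aux bb_bound hyabs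
    have hBf : (∑' k, bb k * y^k) = (s^3)⁻¹ := Bf_eq hy
    have hy_tsum : y * (∑' k, aa2 k * y^k) = (1/4) * ((∑' k, bb k * y^k) - 1) := by
      rw [← tsum_mul_left]
      have h1 : ∀ k : ℕ, y * (aa2 k * y^k) = (1/4) * (bb (k+1) * y^(k+1)) := by
        intro k; rw [idE k]; ring
      rw [tsum_congr h1, tsum_mul_left]
      have h2 := Summable.tsum_eq_zero_add hsumb
      rw [h2]
      norm_num [bb]
    have hg2 : (∑' k, aa2 k * y^k) = (1/4) * ((s^3)⁻¹ - 1) / y := by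
      rw [← hBf]
      field_simp
      linarith [hy_tsum]
    rw [hg2, FPP, ← hs_def]
    have hyv : y = s^2 - 1 := by linarith [hs2]
    rw [hyv]
    have hsne : s^2 - 1 ≠ 0 := by rw [← hyv]; exact h0
    field_simp
    ring

lemma key1 {y : ℝ} (hy : y ∈ Set.Ioo (-1:ℝ) 1) : (∑' k, aa1 k * y^k) = FF1 y := by
  have h := const_on_Ioo (f := fun z => (∑' k, aa1 k * z^k) - FF1 z) ?_ hy
  · have h10 : (∑' k, aa1 k * (0:ℝ)^k) = 0 := by
      rw [tsum_eq_single 0 (fun b hb => by simp [zero_pow hb])]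
      norm_num [aa1]
      rfl
    have hF10 : FF1 0 = 0 := by
      norm_num [FF1, Real.sqrt_one]
    simp only [h10, hF10, sub_zero] at h
    linarith [h]
  · intro z hz
    have hzabs : |z| < 1 := abs_lt.mpr ⟨hz.1, hz.2⟩
    have hd := (hasDeriv_g1 hzabs).sub (hasDeriv_FF1 hz)
    rwa [g2_eq_FPP hz, sub_self] at hd

lemma key0 {y : ℝ} (hy : y ∈ Set.Ioo (-1:ℝ) 1) : (∑' k, aa k * y^k) = FF y := by
  have h := const_on_Ioo (f := fun z => (∑' k, aa k * z^k) - FF z) ?_ hy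
  · have h00 : (∑' k, aa k * (0:ℝ)^k) = 0 := by
      rw [tsum_eq_single 0 (fun b hb => by simp [zero_pow hb])]
      norm_num
      rfl
    have hF0 : FF 0 = 0 := by
      norm_num [FF, Real.sqrt_one]
    simp only [h00, hF0, sub_zero] at h
    linarith [h]
  · intro z hz
    have hzabs : |z| < 1 := abs_lt.mpr ⟨hz.1, hz.2⟩
    have hd := (hasDeriv_g0 hzabs).sub (hasDeriv_FF hz)
    rwa [key1 hz, sub_self] at hd

set_option maxHeartbeats 2000000 in
theorem s1_eq (x : ℝ) (hx : x ∈ Set.Ioo (0:ℝ) 1) :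
    (∑' j : ℕ, poch (-(1/2)) (j + 2) * (1/2 - ((j:ℝ) + 2)) /
        ((((j + 2)!) : ℝ) * (1 - ((j:ℝ) + 2))) * (-x) ^ (j + 2)) =
      (1/4) * (-2 + 2 * Real.sqrt (1 + x) +
        x * (2 * Real.log 2 - 1 - 2 * Real.log (1 + Real.sqrt (1 + x)))) := by
  have hxm : x ∈ Set.Ioo (-1:ℝ) 1 := ⟨by linarith [hx.1], hx.2⟩
  have hxabs : |x| < 1 := abs_lt.mpr ⟨hxm.1, hxm.2⟩
  have hterm : ∀ j : ℕ, poch (-(1/2)) (j + 2) * (1/2 - ((j:ℝ) + 2)) /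
      ((((j + 2)!) : ℝ) * (1 - ((j:ℝ) + 2))) * (-x) ^ (j + 2) = aa (j+2) * x^(j+2) := by
    intro j
    have hneg : (-x)^(j+2) = (-1)^j * x^(j+2) := by
      rw [neg_pow, pow_add]
      norm_num
    rw [aa_eq, hneg]
    ring
  rw [tsum_congr hterm]
  have hsum0 : Summable (fun k => aa k * x^k) := sum_aux aa_bound hxabs
  have hsum1 : Summable (fun k => aa (k+1) * x^(k+1)) := (summable_nat_add_iff 1).mpr hsum0
  have h01 := Summable.tsum_eq_zero_add hsum0
  have h12 := Summable.tsum_eq_zero_add hsum1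
  have hchain : (∑' k, aa k * x^k) = ∑' k, aa (k+2) * x^(k+2) := by
    rw [h01, h12]
    have ha0 : aa 0 = 0 := rfl
    have ha1 : aa 1 = 0 := rfl
    rw [show aa (0+1) = aa 1 from rfl, ha0, ha1]
    simp only [zero_mul, zero_add]
  rw [← hchain, key0 hxm, FF]
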